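/- For every integer k ≥ 4, there exists a coalition partition Ψ of the path P_k with four parts such that the coalition graph CG(P_k, Ψ) is isomorphic to the cycle C_4. -/

import Mathlib

open SimpleGraph

attribute [local instance] Classical.propDecidable

def Dominates {V : Type*} (G : SimpleGraph V) (S : Set V) : Prop :=
  ∀ v, v ∉ S → ∃ u ∈ S, G.Adj u v

def Coalition {V : Type*} (G : SimpleGraph V) (A B : Set V) : Prop :=
  Disjoint A B ∧ ¬ Dominates G A ∧ ¬ Dominates G B ∧ Dominates G (A ∪ B)

def IsCoalitionPartition {V : Type*} (G : SimpleGraph V) (P : Finset (Set V)) : Prop :=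
  (∀ A ∈ P, A.Nonempty) ∧
  (∀ A ∈ P, ∀ B ∈ P, A ≠ B → Disjoint A B) ∧
  (∀ v : V, ∃ A ∈ P, v ∈ A) ∧
  (∀ A ∈ P, (Dominates G A ∧ ∃ v, A = {v}) ∨
    (¬ Dominates G A ∧ ∃ B ∈ P, B ≠ A ∧ Coalition G A B))

noncomputable def coalitionNumber {V : Type*} (G : SimpleGraph V) : ℕ :=
  sSup {n | ∃ P : Finset (Set V), IsCoalitionPartition G P ∧ P.card = n}

def coalitionGraph {V : Type*} (G : SimpleGraph V) (P : Finset (Set V)) :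
    SimpleGraph {A : Set V // A ∈ P} where
  Adj A B := Coalition G A.1 B.1
  symm := by
    constructor
    rintro A B ⟨d, na, nb, u⟩
    exact ⟨d.symm, nb, na, by rwa [Set.union_comm]⟩
  loopless := by
    constructor
    rintro ⟨A, hA⟩ ⟨d, na, nb, u⟩
    rw [Set.union_self] at u
    exact na u

set_option linter.unusedSectionVars false

namespace Stmt12Aux

variable (k : ℕ)

def sA : Set (Fin k) := {v | v.val = 0}
def sB : Set (Fin k) := {v | v.val = 1}
def sC : Set (Fin k) := {v | 2 ≤ v.val ∧ v.val % 2 = 0}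
def sD : Set (Fin k) := {v | 2 ≤ v.val ∧ v.val % 2 = 1}

lemma coal_symm {V : Type*} {G : SimpleGraph V} {A B : Set V}
    (h : Coalition G A B) : Coalition G B A :=
  ⟨h.1.symm, h.2.2.1, h.2.1, by rw [Set.union_comm]; exact h.2.2.2⟩

variable {k} (hk : 4 ≤ k)
include hk

lemma notDom_low {S : Set (Fin k)} (hS : ∀ v ∈ S, v.val ≤ 1) :
    ¬ Dominates (pathGraph k) S := by
  intro h
  obtain ⟨u, hu, hadj⟩ := h ⟨3, by omega⟩ (fun hmem => by have := hS _ hmem; simp at this)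
  have := hS _ hu
  rw [pathGraph_adj] at hadj
  simp only [Fin.val_mk] at hadj
  omega

lemma notDom_high {S : Set (Fin k)} (hS : ∀ v ∈ S, 2 ≤ v.val) :
    ¬ Dominates (pathGraph k) S := by
  intro h
  obtain ⟨u, hu, hadj⟩ := h ⟨0, by omega⟩ (fun hmem => by have := hS _ hmem; simp at this)
  have := hS _ hu
  rw [pathGraph_adj] at hadj
  simp only [Fin.val_mk] at hadj
  omega

lemma domAC : Dominates (pathGraph k) (sA k ∪ sC k) := by
  intro v hv
  simp only [sA, sC, Set.mem_union, Set.mem_setOf_eq, not_or, not_and_or] at hv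
  refine ⟨⟨v.val - 1, by omega⟩, ?_, ?_⟩
  · simp only [sA, sC, Set.mem_union, Set.mem_setOf_eq, Fin.val_mk]; omega
  · rw [pathGraph_adj]; simp only [Fin.val_mk]; omega

lemma domBC : Dominates (pathGraph k) (sB k ∪ sC k) := by
  intro v hv
  simp only [sB, sC, Set.mem_union, Set.mem_setOf_eq, not_or, not_and_or] at hv
  by_cases h0 : v.val = 0
  · exact ⟨⟨1, by omega⟩, Or.inl rfl, by rw [pathGraph_adj]; simp only [Fin.val_mk]; omega⟩
  · refine ⟨⟨v.val - 1, by omega⟩, ?_, ?_⟩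
    · simp only [sB, sC, Set.mem_union, Set.mem_setOf_eq, Fin.val_mk]; omega
    · rw [pathGraph_adj]; simp only [Fin.val_mk]; omega

lemma domAD : Dominates (pathGraph k) (sA k ∪ sD k) := by
  intro v hv
  simp only [sA, sD, Set.mem_union, Set.mem_setOf_eq, not_or, not_and_or] at hv
  by_cases h1 : v.val = 1
  · exact ⟨⟨0, by omega⟩, Or.inl rfl, by rw [pathGraph_adj]; simp only [Fin.val_mk]; omega⟩
  · by_cases h2 : v.val = 2
    · refine ⟨⟨3, by omega⟩, Or.inr ⟨by simp, by simp⟩, ?_⟩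
      rw [pathGraph_adj]; simp only [Fin.val_mk]; omega
    · refine ⟨⟨v.val - 1, by omega⟩, ?_, ?_⟩
      · simp only [sA, sD, Set.mem_union, Set.mem_setOf_eq, Fin.val_mk]; omega
      · rw [pathGraph_adj]; simp only [Fin.val_mk]; omega

lemma domBD : Dominates (pathGraph k) (sB k ∪ sD k) := by
  intro v hv
  simp only [sB, sD, Set.mem_union, Set.mem_setOf_eq, not_or, not_and_or] at hv
  by_cases h0 : v.val = 0 ∨ v.val = 2
  · exact ⟨⟨1, by omega⟩, Or.inl rfl, by rw [pathGraph_adj]; simp only [Fin.val_mk]; omega⟩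
  · refine ⟨⟨v.val - 1, by omega⟩, ?_, ?_⟩
    · simp only [sB, sD, Set.mem_union, Set.mem_setOf_eq, Fin.val_mk]; omega
    · rw [pathGraph_adj]; simp only [Fin.val_mk]; omega

lemma notDomA : ¬ Dominates (pathGraph k) (sA k) :=
  notDom_low hk (fun v hv => by simp only [sA, Set.mem_setOf_eq] at hv; omega)

lemma notDomB : ¬ Dominates (pathGraph k) (sB k) :=
  notDom_low hk (fun v hv => by simp only [sB, Set.mem_setOf_eq] at hv; omega)

lemma notDomC : ¬ Dominates (pathGraph k) (sC k) :=
  notDom_high hk (fun v hv => by simp only [sC, Set.mem_setOf_eq] at hv; omega)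

lemma notDomD : ¬ Dominates (pathGraph k) (sD k) :=
  notDom_high hk (fun v hv => by simp only [sD, Set.mem_setOf_eq] at hv; omega)

lemma notDomAB : ¬ Dominates (pathGraph k) (sA k ∪ sB k) :=
  notDom_low hk (fun v hv => by
    simp only [sA, sB, Set.mem_union, Set.mem_setOf_eq] at hv; omega)

lemma notDomCD : ¬ Dominates (pathGraph k) (sC k ∪ sD k) :=
  notDom_high hk (fun v hv => by
    simp only [sC, sD, Set.mem_union, Set.mem_setOf_eq] at hv; omega)

lemma coalAC : Coalition (pathGraph k) (sA k) (sC k) :=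
  ⟨Set.disjoint_left.mpr (fun v hv hv' => by
      simp only [sA, sC, Set.mem_setOf_eq] at hv hv'; omega),
   notDomA hk, notDomC hk, domAC hk⟩

lemma coalAD : Coalition (pathGraph k) (sA k) (sD k) :=
  ⟨Set.disjoint_left.mpr (fun v hv hv' => by
      simp only [sA, sD, Set.mem_setOf_eq] at hv hv'; omega),
   notDomA hk, notDomD hk, domAD hk⟩

lemma coalBC : Coalition (pathGraph k) (sB k) (sC k) :=
  ⟨Set.disjoint_left.mpr (fun v hv hv' => by
      simp only [sB, sC, Set.mem_setOf_eq] at hv hv'; omega),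
   notDomB hk, notDomC hk, domBC hk⟩

lemma coalBD : Coalition (pathGraph k) (sB k) (sD k) :=
  ⟨Set.disjoint_left.mpr (fun v hv hv' => by
      simp only [sB, sD, Set.mem_setOf_eq] at hv hv'; omega),
   notDomB hk, notDomD hk, domBD hk⟩

lemma ncoalAB : ¬ Coalition (pathGraph k) (sA k) (sB k) :=
  fun h => notDomAB hk h.2.2.2

lemma ncoalBA : ¬ Coalition (pathGraph k) (sB k) (sA k) := fun h => by
  have := h.2.2.2; rw [Set.union_comm] at this; exact notDomAB hk this

lemma ncoalCD : ¬ Coalition (pathGraph k) (sC k) (sD k) :=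
  fun h => notDomCD hk h.2.2.2

lemma ncoalDC : ¬ Coalition (pathGraph k) (sD k) (sC k) := fun h => by
  have := h.2.2.2; rw [Set.union_comm] at this; exact notDomCD hk this

-- distinctness
lemma neAB : sA k ≠ sB k := fun h => by
  have := Set.ext_iff.mp h ⟨0, by omega⟩
  simp [sA, sB] at this

lemma neAC : sA k ≠ sC k := fun h => by
  have := Set.ext_iff.mp h ⟨0, by omega⟩
  simp [sA, sC] at this

lemma neAD : sA k ≠ sD k := fun h => by
  have := Set.ext_iff.mp h ⟨0, by omega⟩
  simp [sA, sD] at this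

lemma neBC : sB k ≠ sC k := fun h => by
  have := Set.ext_iff.mp h ⟨1, by omega⟩
  simp [sB, sC] at this

lemma neBD : sB k ≠ sD k := fun h => by
  have := Set.ext_iff.mp h ⟨1, by omega⟩
  simp [sB, sD] at this

lemma neCD : sC k ≠ sD k := fun h => by
  have := Set.ext_iff.mp h ⟨2, by omega⟩
  simp [sC, sD] at this

end Stmt12Aux

open Stmt12Aux in
theorem stmt12 (k : ℕ) (hk : 4 ≤ k) :
    ∃ P : Finset (Set (Fin k)),
      IsCoalitionPartition (SimpleGraph.pathGraph k) P ∧ P.card = 4 ∧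
      Nonempty ((coalitionGraph (SimpleGraph.pathGraph k) P) ≃g
        SimpleGraph.cycleGraph 4) := by
  classical
  set G := SimpleGraph.pathGraph k with hG
  refine ⟨{sA k, sB k, sC k, sD k}, ⟨?_, ?_, ?_, ?_⟩, ?_, ?_⟩
  · -- nonempty
    intro A hA
    simp only [Finset.mem_insert, Finset.mem_singleton] at hA
    rcases hA with rfl | rfl | rfl | rfl
    · exact ⟨⟨0, by omega⟩, rfl⟩
    · exact ⟨⟨1, by omega⟩, rfl⟩
    · exact ⟨⟨2, by omega⟩, by constructor <;> simp⟩
    · exact ⟨⟨3, by omega⟩, by constructor <;> simp⟩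
  · -- pairwise disjoint
    intro A hA B hB hne
    simp only [Finset.mem_insert, Finset.mem_singleton] at hA hB
    rcases hA with rfl | rfl | rfl | rfl <;> rcases hB with rfl | rfl | rfl | rfl <;>
      first
        | exact absurd rfl hne
        | exact Set.disjoint_left.mpr (fun v hv hv' => by
            simp only [sA, sB, sC, sD, Set.mem_setOf_eq] at hv hv'; omega)
  · -- cover
    intro v
    by_cases h0 : v.val = 0
    · exact ⟨sA k, by simp, h0⟩
    · by_cases h1 : v.val = 1
      · exact ⟨sB k, by simp, h1⟩
      · by_cases h2 : v.val % 2 = 0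
        · exact ⟨sC k, by simp, ⟨by omega, h2⟩⟩
        · exact ⟨sD k, by simp, ⟨by omega, by omega⟩⟩
  · -- coalition condition
    intro A hA
    simp only [Finset.mem_insert, Finset.mem_singleton] at hA
    rcases hA with rfl | rfl | rfl | rfl
    · exact Or.inr ⟨notDomA hk, sC k, by simp, (neAC hk).symm, coalAC hk⟩
    · exact Or.inr ⟨notDomB hk, sC k, by simp, (neBC hk).symm, coalBC hk⟩
    · exact Or.inr ⟨notDomC hk, sA k, by simp, neAC hk, coal_symm (coalAC hk)⟩
    · exact Or.inr ⟨notDomD hk, sA k, by simp, neAD hk, coal_symm (coalAD hk)⟩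
  · -- card
    rw [Finset.card_insert_of_notMem (by simp [neAB hk, neAC hk, neAD hk]),
        Finset.card_insert_of_notMem (by simp [neBC hk, neBD hk]),
        Finset.card_insert_of_notMem (by simp [neCD hk]), Finset.card_singleton]
  · -- iso
    set P : Finset (Set (Fin k)) := {sA k, sB k, sC k, sD k} with hP
    have mA : sA k ∈ P := by simp [hP]
    have mB : sB k ∈ P := by simp [hP]
    have mC : sC k ∈ P := by simp [hP]
    have mD : sD k ∈ P := by simp [hP]
    let f : Fin 4 → {X : Set (Fin k) // X ∈ P} :=
      ![⟨sA k, mA⟩, ⟨sC k, mC⟩, ⟨sB k, mB⟩, ⟨sD k, mD⟩]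
    have hbij : Function.Bijective f := by
      constructor
      · intro i j hij
        fin_cases i <;> fin_cases j <;> first
          | rfl
          | (exfalso
             have := congrArg Subtype.val hij
             simp only [f, Matrix.cons_val_zero, Matrix.cons_val_one, Matrix.head_cons,
               Matrix.cons_val_two, Matrix.tail_cons, Matrix.cons_val_three] at this
             first
               | exact neAB hk this | exact neAB hk this.symm
               | exact neAC hk this | exact neAC hk this.symm
               | exact neAD hk this | exact neAD hk this.symm
               | exact neBC hk this | exact neBC hk this.symm
               | exact neBD hk this | exact neBD hk this.symm
               | exact neCD hk this | exact neCD hk this.symm)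
      · rintro ⟨X, hX⟩
        simp only [hP, Finset.mem_insert, Finset.mem_singleton] at hX
        rcases hX with rfl | rfl | rfl | rfl
        · exact ⟨0, rfl⟩
        · exact ⟨2, rfl⟩
        · exact ⟨1, rfl⟩
        · exact ⟨3, rfl⟩
    refine ⟨(⟨Equiv.ofBijective f hbij, ?_⟩ : SimpleGraph.cycleGraph 4 ≃g _).symm⟩
    intro i j
    show (coalitionGraph G P).Adj (f i) (f j) ↔ (SimpleGraph.cycleGraph 4).Adj i j
    have hself : ∀ X : Set (Fin k), ¬ Coalition G X X := fun X h => h.2.1 (by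
      have := h.2.2.2; rwa [Set.union_self] at this)
    fin_cases i <;> fin_cases j <;>
      simp (config := { decide := true }) [f, coalitionGraph, cycleGraph_adj, hG,
        coalAC hk, coalAD hk, coalBC hk, coalBD hk,
        coal_symm (coalAC hk), coal_symm (coalAD hk), coal_symm (coalBC hk), coal_symm (coalBD hk),
        ncoalAB hk, ncoalBA hk, ncoalCD hk, ncoalDC hk,
        hself (sA k), hself (sB k), hself (sC k), hself (sD k)]
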